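/- In the two-player setting (players 0 and 1) with vertex set V, maximum edge weight W, and initial vertex v_0, let c ∈ ℕ. If there exists a c-witness, then there exists a c-witness π′ such that either cost_1(π′) = +∞ or cost_1(π′) ≤ 2·|V|·W. -/

import Mathlib

open scoped Classical

/-- An infinite play in the graph with edge relation `E`. -/
def IsPlay {V : Type*} (E : V → V → Prop) (π : ℕ → V) : Prop :=
  ∀ k, E (π k) (π (k + 1))

/-- The history `π 0, …, π k` as a list. -/
def histList {V : Type*} (π : ℕ → V) (k : ℕ) : List V :=
  (List.range (k + 1)).map π

/-- The accumulated weight of the first `n` edges of `π`. -/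
def pathWeight {V : Type*} (w : V → V → ℕ) (π : ℕ → V) (n : ℕ) : ℕ :=
  ∑ j ∈ Finset.range n, w (π j) (π (j + 1))

/-- The cost of a play for weight function `w` and target set `T` : the accumulated
weight up to the first visit of `T`, and `+∞` if `T` is never visited. -/
noncomputable def cost {V : Type*} (w : V → V → ℕ) (T : Set V) (π : ℕ → V) : ℕ∞ :=
  if h : ∃ n, π n ∈ T then (pathWeight w π (Nat.find h) : ℕ∞) else ⊤

/-- `σ` is a strategy for the player owning the set of vertices `Vi`. -/
def IsStrategy {V : Type*} (E : V → V → Prop) (Vi : Set V) (σ : List V → V) : Prop :=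
  ∀ (l : List V) (u : V), List.Chain' E (l ++ [u]) → u ∈ Vi → E u (σ (l ++ [u]))

/-- A play is consistent with the strategy `σ` of the player owning `Vi`. -/
def PlayConsistent {V : Type*} (Vi : Set V) (σ : List V → V) (π : ℕ → V) : Prop :=
  ∀ k, π k ∈ Vi → π (k + 1) = σ (histList π k)


/-- In the two-player setting (player 0 owns `V0`, player 1 owns `V0ᶜ`), the play `π`
is the outcome of a `σ0`-fixed Nash equilibrium: for some strategy `σ1` of player 1,
`π` is the outcome of `(σ0, σ1)` from `v0` and player 1 has no profitable deviation. -/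
def NEOutcome2 {V : Type*} (E : V → V → Prop) (V0 : Set V) (v0 : V)
    (w1 : V → V → ℕ) (T1 : Set V) (σ0 : List V → V) (π : ℕ → V) : Prop :=
  ∃ σ1 : List V → V, IsStrategy E V0ᶜ σ1 ∧
    IsPlay E π ∧ π 0 = v0 ∧ PlayConsistent V0 σ0 π ∧ PlayConsistent V0ᶜ σ1 π ∧
    ∀ τ1 : List V → V, IsStrategy E V0ᶜ τ1 →
      ∀ π' : ℕ → V, IsPlay E π' → π' 0 = v0 →
        PlayConsistent V0 σ0 π' → PlayConsistent V0ᶜ τ1 π' →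
        cost w1 T1 π ≤ cost w1 T1 π'

/-- The play `h · ρ` obtained by concatenating the history `h` with the play `ρ`. -/
def concatPlay {V : Type*} (h : List V) (ρ : ℕ → V) : ℕ → V := fun k =>
  if hk : k < h.length then h.get ⟨k, hk⟩ else ρ (k - h.length)

/-- Player 0 (owning `V0`) wins from `v` for the objective `Ω`. -/
def Player0Wins {V : Type*} (E : V → V → Prop) (V0 : Set V) (v : V)
    (Ω : (ℕ → V) → Prop) : Prop :=
  ∃ σ : List V → V, IsStrategy E V0 σ ∧
    ∀ ρ, IsPlay E ρ → ρ 0 = v → PlayConsistent V0 σ ρ → Ω ρ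

/-- `π` is a `c`-witness: a play from `v0` with `cost₀ π ≤ c` such that, with
`d = cost₁ π`, for every deviation `hv` of `π` (where `last h = π m` is owned by
player 1), player 0 wins from `v` for the objective
`cost₀(h·ρ) ≤ c or cost₁(h·ρ) > d`. -/
def IsCWitness {V : Type*} (E : V → V → Prop) (V0 : Set V) (v0 : V)
    (w0 w1 : V → V → ℕ) (T0 T1 : Set V) (c : ℕ) (π : ℕ → V) : Prop :=
  IsPlay E π ∧ π 0 = v0 ∧ cost w0 T0 π ≤ (c : ℕ∞) ∧
    ∀ (m : ℕ) (v : V), π m ∉ V0 → E (π m) v → v ≠ π (m + 1) →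
      Player0Wins E V0 v (fun ρ =>
        cost w0 T0 (concatPlay (histList π m) ρ) ≤ (c : ℕ∞) ∨
        cost w1 T1 π < cost w1 T1 (concatPlay (histList π m) ρ))


section Helpers

variable {V : Type*}

/-- Removing the segment between `i` and `j` from a play. -/
def removal (π : ℕ → V) (i j : ℕ) : ℕ → V := fun k =>
  if k < i then π k else π (k + (j - i))

lemma removal_eq_low {π : ℕ → V} {i j k : ℕ} (hij : π i = π j) (hj : i ≤ j)
    (hk : k ≤ i) : removal π i j k = π k := by
  rcases lt_or_eq_of_le hk with h | h
  · simp [removal, h]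
  · subst h
    simp only [removal, lt_irrefl, if_false]
    rw [show k + (j - k) = j by omega, ← hij]

lemma removal_eq_high {π : ℕ → V} {i j k : ℕ} (hk : i ≤ k) :
    removal π i j k = π (k + (j - i)) := by
  simp [removal, Nat.not_lt.2 hk]

lemma removal_isPlay {E : V → V → Prop} {π : ℕ → V} {i j : ℕ} (hlt : i < j)
    (hij : π i = π j) (hp : IsPlay E π) : IsPlay E (removal π i j) := by
  intro k
  rcases le_or_gt (k + 1) i with h | h
  · rw [removal_eq_low hij hlt.le h, removal_eq_low hij hlt.le (by omega)]
    exact hp k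
  · have hk : i ≤ k := by omega
    rw [removal_eq_high hk, removal_eq_high (by omega : i ≤ k + 1),
      show k + 1 + (j - i) = (k + (j - i)) + 1 by omega]
    exact hp _

lemma pathWeight_congr {w : V → V → ℕ} {p q : ℕ → V} {n : ℕ}
    (h : ∀ k ≤ n, p k = q k) : pathWeight w p n = pathWeight w q n := by
  refine Finset.sum_congr rfl fun t ht => ?_
  have ht' := Finset.mem_range.1 ht
  rw [h t (by omega), h (t + 1) (by omega)]

lemma pathWeight_succ (w : V → V → ℕ) (p : ℕ → V) (n : ℕ) :
    pathWeight w p (n + 1) = pathWeight w p n + w (p n) (p (n + 1)) :=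
  Finset.sum_range_succ _ _

lemma pathWeight_mono {w : V → V → ℕ} {p : ℕ → V} {m n : ℕ} (h : m ≤ n) :
    pathWeight w p m ≤ pathWeight w p n :=
  Finset.sum_le_sum_of_subset (Finset.range_subset_range.2 h)

lemma pathWeight_le {E : V → V → Prop} {w : V → V → ℕ} {p : ℕ → V} {W n : ℕ}
    (hp : IsPlay E p) (hW : ∀ u v, E u v → w u v ≤ W) :
    pathWeight w p n ≤ n * W := by
  calc pathWeight w p n ≤ ∑ _j ∈ Finset.range n, W :=
        Finset.sum_le_sum fun t _ => hW _ _ (hp t)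
    _ = n * W := by simp [mul_comm]

lemma pathWeight_removal_low {w : V → V → ℕ} {π : ℕ → V} {i j n : ℕ}
    (hij : π i = π j) (hj : i ≤ j) (hn : n ≤ i) :
    pathWeight w (removal π i j) n = pathWeight w π n :=
  pathWeight_congr fun k hk => removal_eq_low hij hj (le_trans hk hn)

lemma pathWeight_removal_high {w : V → V → ℕ} {π : ℕ → V} {i j : ℕ}
    (hlt : i < j) (hij : π i = π j) :
    ∀ n, i ≤ n → pathWeight w (removal π i j) n + pathWeight w π j =
      pathWeight w π (n + (j - i)) + pathWeight w π i := by
  refine Nat.le_induction ?_ ?_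
  · rw [pathWeight_removal_low hij hlt.le le_rfl, show i + (j - i) = j by omega]
    ring
  · intro n hn ih
    rw [pathWeight_succ, removal_eq_high hn, removal_eq_high (by omega : i ≤ n + 1),
      show n + 1 + (j - i) = (n + (j - i)) + 1 by omega, pathWeight_succ]
    omega

lemma cost_eq_of_first {w : V → V → ℕ} {T : Set V} {p : ℕ → V} {n : ℕ}
    (hn : p n ∈ T) (hfirst : ∀ k < n, p k ∉ T) :
    cost w T p = (pathWeight w p n : ℕ∞) := by
  have hex : ∃ m, p m ∈ T := ⟨n, hn⟩
  have : Nat.find hex = n := (Nat.find_eq_iff hex).2 ⟨hn, fun k hk => hfirst k hk⟩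
  rw [cost, dif_pos hex, this]

lemma cost_eq_top {w : V → V → ℕ} {T : Set V} {p : ℕ → V}
    (h : ∀ n, p n ∉ T) : cost w T p = ⊤ := by
  rw [cost, dif_neg]; push_neg; exact h

lemma cost_removal_low {w : V → V → ℕ} {T : Set V} {π : ℕ → V} {i j n : ℕ}
    (hlt : i < j) (hij : π i = π j) (hn : n ≤ i) (hT : π n ∈ T)
    (hfirst : ∀ k < n, π k ∉ T) :
    cost w T (removal π i j) = cost w T π := by
  rw [cost_eq_of_first hT hfirst,
    cost_eq_of_first (p := removal π i j) (n := n)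
      (by rw [removal_eq_low hij hlt.le hn]; exact hT)
      (fun k hk => by rw [removal_eq_low hij hlt.le (by omega)]; exact hfirst k hk),
    pathWeight_removal_low hij hlt.le hn]

lemma cost_removal_high {w : V → V → ℕ} {T : Set V} {π : ℕ → V} {i j : ℕ}
    (hlt : i < j) (hij : π i = π j) (hT : ∀ k < j, π k ∉ T) :
    cost w T (removal π i j) + (pathWeight w π j : ℕ∞) =
      cost w T π + (pathWeight w π i : ℕ∞) := by
  by_cases hex : ∃ n, π n ∈ T
  · obtain ⟨n, hn, hfirst⟩ : ∃ n, π n ∈ T ∧ ∀ k < n, π k ∉ T :=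
      ⟨Nat.find hex, Nat.find_spec hex, fun k hk => Nat.find_min hex hk⟩
    have hjn : j ≤ n := by
      by_contra hc; exact hT n (by omega) hn
    have h1 : removal π i j (n - (j - i)) ∈ T := by
      rw [removal_eq_high (by omega), show n - (j - i) + (j - i) = n by omega]
      exact hn
    have h2 : ∀ k < n - (j - i), removal π i j k ∉ T := by
      intro k hk
      rcases lt_or_ge k i with h | h
      · rw [removal_eq_low hij hlt.le h.le]; exact hfirst k (by omega)
      · rw [removal_eq_high h]; exact hfirst _ (by omega)
    rw [cost_eq_of_first hn hfirst, cost_eq_of_first h1 h2]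
    rw [← Nat.cast_add, ← Nat.cast_add, Nat.cast_inj]
    have := pathWeight_removal_high (w := w) hlt hij (n - (j - i)) (by omega)
    rwa [show n - (j - i) + (j - i) = n by omega] at this
  · push_neg at hex
    have h2 : ∀ k, removal π i j k ∉ T := by
      intro k; rcases lt_or_ge k i with h | h
      · rw [removal_eq_low hij hlt.le h.le]; exact hex k
      · rw [removal_eq_high h]; exact hex _
    rw [cost_eq_top hex, cost_eq_top h2, top_add, top_add]

lemma cost_removal_le {w : V → V → ℕ} {T : Set V} {π : ℕ → V} {i j : ℕ}
    (hlt : i < j) (hij : π i = π j) (hT : ∀ k < j, π k ∉ T) :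
    cost w T (removal π i j) ≤ cost w T π := by
  have h := cost_removal_high (w := w) hlt hij hT
  have hle : cost w T (removal π i j) + (pathWeight w π i : ℕ∞) ≤
      cost w T π + (pathWeight w π i : ℕ∞) := by
    calc cost w T (removal π i j) + (pathWeight w π i : ℕ∞)
        ≤ cost w T (removal π i j) + (pathWeight w π j : ℕ∞) := by
          gcongr; exact_mod_cast pathWeight_mono hlt.le
      _ = cost w T π + (pathWeight w π i : ℕ∞) := h
  exact (WithTop.add_le_add_iff_right (ENat.coe_ne_top _)).1 hle

lemma concat_hist_eq {π : ℕ → V} {ρ : ℕ → V} {m k : ℕ} (hk : k ≤ m) :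
    concatPlay (histList π m) ρ k = π k := by
  have hlen : (histList π m).length = m + 1 := by simp [histList]
  have hk' : k < (histList π m).length := by omega
  rw [concatPlay, dif_pos hk']
  simp [histList]

lemma concat_hist_eq_high {π : ℕ → V} {ρ : ℕ → V} {m k : ℕ} (hk : m < k) :
    concatPlay (histList π m) ρ k = ρ (k - (m + 1)) := by
  have hlen : (histList π m).length = m + 1 := by simp [histList]
  rw [concatPlay, dif_neg (by omega)]
  rw [hlen]

lemma histList_congr {π π' : ℕ → V} {m : ℕ} (h : ∀ k ≤ m, π k = π' k) :
    histList π m = histList π' m := by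
  unfold histList
  refine List.map_congr_left fun k hk => h k (by simpa using Nat.lt_succ_iff.1 (List.mem_range.1 hk))

lemma concat_removal {π : ℕ → V} {ρ : ℕ → V} {i j m : ℕ}
    (hlt : i < j) (hij : π i = π j) (him : i ≤ m) :
    concatPlay (histList (removal π i j) m) ρ =
      removal (concatPlay (histList π (m + (j - i))) ρ) i j := by
  funext k
  rcases lt_or_ge k i with h | h
  · rw [show removal (concatPlay (histList π (m + (j - i))) ρ) i j k =
        concatPlay (histList π (m + (j - i))) ρ k by simp [removal, h],
      concat_hist_eq (by omega), concat_hist_eq (by omega),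
      removal_eq_low hij hlt.le h.le]
  · rw [removal_eq_high h]
    rcases le_or_gt k m with h2 | h2
    · rw [concat_hist_eq h2, concat_hist_eq (by omega), removal_eq_high h]
    · rw [concat_hist_eq_high h2, concat_hist_eq_high (by omega),
        show k + (j - i) - (m + (j - i) + 1) = k - (m + 1) by omega]

end Helpers

section Main

variable {V : Type*} {E : V → V → Prop} {V0 : Set V} {v0 : V}
  {w0 w1 : V → V → ℕ} {T0 T1 : Set V} {W c : ℕ}

/-- A trivial strategy that just picks some successor. -/
noncomputable def trivStrat (E : V → V → Prop) (hE : ∀ u, ∃ v, E u v) (v0 : V) :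
    List V → V :=
  fun l => Classical.choose (hE (l.getLastD v0))

lemma trivStrat_isStrategy (hE : ∀ u, ∃ v, E u v) :
    IsStrategy E V0 (trivStrat E hE v0) := by
  intro l u _ _
  have h : (l ++ [u]).getLastD v0 = u := List.getLastD_concat
  have hs : E ((l ++ [u]).getLastD v0) (trivStrat E hE v0 (l ++ [u])) :=
    Classical.choose_spec (hE ((l ++ [u]).getLastD v0))
  rwa [h] at hs

lemma key [Fintype V] (hE : ∀ u, ∃ v, E u v)
    (hW1 : ∀ u v, E u v → w1 u v ≤ W) :
    ∀ N : ℕ, ∀ π : ℕ → V, IsCWitness E V0 v0 w0 w1 T0 T1 c π →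
      π N ∈ T1 → (∀ k < N, π k ∉ T1) →
      ∃ π', IsCWitness E V0 v0 w0 w1 T0 T1 c π' ∧
        cost w1 T1 π' ≤ ((2 * Fintype.card V * W : ℕ) : ℕ∞) := by
  intro N
  induction N using Nat.strong_induction_on with
  | _ N IH =>
  intro π hw hN hfirst
  obtain ⟨hplay, h0, hc0, hdev⟩ := hw
  have hex0 : ∃ n, π n ∈ T0 := by
    by_contra hc
    push_neg at hc
    rw [cost_eq_top hc, top_le_iff] at hc0
    exact ENat.coe_ne_top c hc0
  set n0 := Nat.find hex0 with hn0def
  have hn0T : π n0 ∈ T0 := Nat.find_spec hex0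
  have hn0first : ∀ k < n0, π k ∉ T0 := fun k hk => Nat.find_min hex0 hk
  have hc0' : (pathWeight w0 π n0 : ℕ∞) ≤ (c : ℕ∞) := by
    rw [← cost_eq_of_first hn0T hn0first]; exact hc0
  by_cases hcyc : ∃ i j, i < j ∧ j ≤ N ∧ (j ≤ n0 ∨ n0 ≤ i) ∧ π i = π j
  · obtain ⟨i, j, hlt, hjN, hside, hij⟩ := hcyc
    set π'' := removal π i j with hπ''def
    have hπ''low : ∀ k ≤ i, π'' k = π k := fun k hk => removal_eq_low hij hlt.le hk
    have hT1j : ∀ k < j, π k ∉ T1 := fun k hk => hfirst k (by omega)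
    have hc0'' : cost w0 T0 π'' ≤ (c : ℕ∞) := by
      rcases hside with hs | hs
      · exact le_trans (cost_removal_le hlt hij fun k hk => hn0first k (by omega)) hc0
      · rw [hπ''def, cost_removal_low hlt hij hs hn0T hn0first]; exact hc0
    have hd'' : cost w1 T1 π'' + (pathWeight w1 π j : ℕ∞) =
        cost w1 T1 π + (pathWeight w1 π i : ℕ∞) := cost_removal_high hlt hij hT1j
    have hdle : cost w1 T1 π'' ≤ cost w1 T1 π := cost_removal_le hlt hij hT1j
    have hwit : IsCWitness E V0 v0 w0 w1 T0 T1 c π'' := by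
      refine ⟨removal_isPlay hlt hij hplay,
        by rw [hπ''low 0 (Nat.zero_le _)]; exact h0, hc0'', ?_⟩
      intro m v hm hEv hne
      rcases lt_or_ge m i with hmi | hmi
      · -- deviation before the removed cycle
        have e1 : π'' m = π m := hπ''low m (by omega)
        have e2 : π'' (m + 1) = π (m + 1) := hπ''low (m + 1) (by omega)
        have e3 : histList π'' m = histList π m :=
          histList_congr fun k hk => hπ''low k (by omega)
        rw [e1] at hm hEv
        rw [e2] at hne
        obtain ⟨σ, hσ, hwin⟩ := hdev m v hm hEv hne
        refine ⟨σ, hσ, fun ρ h1 h2 h3 => ?_⟩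
        rw [e3]
        rcases hwin ρ h1 h2 h3 with h | h
        · exact Or.inl h
        · exact Or.inr (lt_of_le_of_lt hdle h)
      · rcases hside with hjn0 | hn0i
        · -- cycle entirely before n0 : map the deviation to position m + (j - i)
          set m' := m + (j - i) with hm'def
          have e1 : π'' m = π m' := removal_eq_high hmi
          have e2 : π'' (m + 1) = π (m' + 1) := by
            rw [hπ''def, removal_eq_high (by omega : i ≤ m + 1),
              show m + 1 + (j - i) = m' + 1 by omega]
          rw [e1] at hm hEv
          rw [e2] at hne
          obtain ⟨σ, hσ, hwin⟩ := hdev m' v hm hEv hne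
          refine ⟨σ, hσ, fun ρ h1 h2 h3 => ?_⟩
          have hP := hwin ρ h1 h2 h3
          set P := concatPlay (histList π m') ρ with hPdef
          have hrw : concatPlay (histList π'' m) ρ = removal P i j :=
            concat_removal hlt hij hmi
          have hPlow : ∀ k ≤ j, P k = π k := fun k hk =>
            concat_hist_eq (by omega)
          have hPij : P i = P j := by
            rw [hPlow i (by omega), hPlow j le_rfl, hij]
          have hT0P : ∀ k < j, P k ∉ T0 := fun k hk => by
            rw [hPlow k hk.le]; exact hn0first k (by omega)
          have hT1P : ∀ k < j, P k ∉ T1 := fun k hk => by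
            rw [hPlow k hk.le]; exact hT1j k hk
          show cost w0 T0 (concatPlay (histList π'' m) ρ) ≤ (c : ℕ∞) ∨
            cost w1 T1 π'' < cost w1 T1 (concatPlay (histList π'' m) ρ)
          rw [hrw]
          rcases hP with h | h
          · exact Or.inl (le_trans (cost_removal_le hlt hPij hT0P) h)
          · refine Or.inr ?_
            have hPwj : pathWeight w1 P j = pathWeight w1 π j :=
              pathWeight_congr fun k hk => hPlow k hk
            have hPwi : pathWeight w1 P i = pathWeight w1 π i :=
              pathWeight_congr fun k hk => hPlow k (by omega)
            have hhigh := cost_removal_high (w := w1) hlt hPij hT1P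
            rw [hPwj, hPwi] at hhigh
            have h4 : cost w1 T1 π + (pathWeight w1 π i : ℕ∞) <
                cost w1 T1 P + (pathWeight w1 π i : ℕ∞) :=
              WithTop.add_lt_add_right (ENat.coe_ne_top _) h
            rw [← hd'', ← hhigh] at h4
            exact (WithTop.add_lt_add_iff_right (ENat.coe_ne_top _)).1 h4
        · -- T0 already reached inside the history : player 0 wins trivially
          refine ⟨trivStrat E hE v0, trivStrat_isStrategy hE,
            fun ρ h1 h2 h3 => Or.inl ?_⟩
          have hQ0 : ∀ k ≤ n0, concatPlay (histList π'' m) ρ k = π k := fun k hk => by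
            rw [concat_hist_eq (by omega), hπ''low k (by omega)]
          have hfst : concatPlay (histList π'' m) ρ n0 ∈ T0 := by
            rw [hQ0 n0 le_rfl]; exact hn0T
          have hpre : ∀ k < n0, concatPlay (histList π'' m) ρ k ∉ T0 := fun k hk => by
            rw [hQ0 k (by omega)]; exact hn0first k hk
          rw [cost_eq_of_first hfst hpre, pathWeight_congr hQ0]
          exact hc0'
    have hN' : π'' (N - (j - i)) ∈ T1 := by
      rw [hπ''def, removal_eq_high (by omega : i ≤ N - (j - i)),
        show N - (j - i) + (j - i) = N by omega]
      exact hN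
    have hfirst' : ∀ k < N - (j - i), π'' k ∉ T1 := by
      intro k hk
      rcases lt_or_ge k i with h | h
      · rw [hπ''low k h.le]; exact hfirst k (by omega)
      · rw [hπ''def, removal_eq_high h]; exact hfirst _ (by omega)
    exact IH (N - (j - i)) (by omega) π'' hwit hN' hfirst'
  · -- no removable cycle : the play is short, bound its cost
    push_neg at hcyc
    have hM : min n0 N + 1 ≤ Fintype.card V := by
      rw [← Finset.card_range (min n0 N + 1), ← Finset.card_univ]
      refine Finset.card_le_card_of_injOn π (fun a _ => Finset.mem_univ _) ?_
      intro a ha b hb hab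
      simp only [Finset.coe_range, Set.mem_Iio] at ha hb
      by_contra hne
      rcases Nat.lt_or_ge a b with hab' | hab'
      · exact hcyc a b hab' (by omega) (Or.inl (by omega)) hab
      · exact hcyc b a (by omega) (by omega) (Or.inl (by omega)) hab.symm
    have hcard : N ≤ 2 * Fintype.card V := by
      rcases le_or_gt N n0 with hle | hlt'
      · omega
      · have h2 : N - n0 + 1 ≤ Fintype.card V := by
          rw [show N - n0 + 1 = (Finset.Icc n0 N).card by rw [Nat.card_Icc]; omega,
            ← Finset.card_univ]
          refine Finset.card_le_card_of_injOn π (fun a _ => Finset.mem_univ _) ?_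
          intro a ha b hb hab
          simp only [Finset.coe_Icc, Set.mem_Icc] at ha hb
          by_contra hne
          rcases Nat.lt_or_ge a b with hab' | hab'
          · exact hcyc a b hab' (by omega) (Or.inr (by omega)) hab
          · exact hcyc b a (by omega) (by omega) (Or.inr (by omega)) hab.symm
        omega
    refine ⟨π, ⟨hplay, h0, hc0, hdev⟩, ?_⟩
    rw [cost_eq_of_first hN hfirst]
    have hb : pathWeight w1 π N ≤ 2 * Fintype.card V * W :=
      le_trans (pathWeight_le hplay hW1) (Nat.mul_le_mul_right W hcard)
    exact_mod_cast hb

end Main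

theorem cwitness_bound {V : Type*} [Fintype V] (E : V → V → Prop)
    (hE : ∀ u, ∃ v, E u v) (V0 : Set V) (v0 : V)
    (w0 w1 : V → V → ℕ) (T0 T1 : Set V) (W : ℕ)
    (hW0 : ∀ u v, E u v → w0 u v ≤ W) (hW1 : ∀ u v, E u v → w1 u v ≤ W) (c : ℕ)
    (h : ∃ π : ℕ → V, IsCWitness E V0 v0 w0 w1 T0 T1 c π) :
    ∃ π' : ℕ → V, IsCWitness E V0 v0 w0 w1 T0 T1 c π' ∧
      (cost w1 T1 π' = ⊤ ∨ cost w1 T1 π' ≤ (2 * Fintype.card V * W : ℕ)) := by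
  obtain ⟨π, hw⟩ := h
  by_cases hex : ∃ n, π n ∈ T1
  · obtain ⟨π', hw', hb⟩ := key hE hW1 (Nat.find hex) π hw (Nat.find_spec hex)
      (fun k hk => Nat.find_min hex hk)
    exact ⟨π', hw', Or.inr hb⟩
  · push_neg at hex
    exact ⟨π, hw, Or.inl (cost_eq_top hex)⟩
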